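/- There exists a resolvable decomposition of the graph C_{5(6)} (the lexicographic blow-up of the 5-cycle by 6 independent vertices) into 9 parallel classes each consisting of 10 vertex-disjoint paths P_3 covering all 30 vertices. -/

import Mathlib

/-- The edges of a path given by the list of its vertices in order. -/
def pathEdges {V : Type*} [DecidableEq V] (l : List V) : Finset (Sym2 V) :=
  ((l.zip l.tail).map (fun p : V × V => Sym2.mk p.1 p.2)).toFinset

/-- A parallel class of paths on `k` vertices in a graph `G`: a set of lists, each
a path on `k` vertices of `G`, which are vertex-disjoint and cover every vertex. -/
def IsPathClass {V : Type*} (G : SimpleGraph V) (k : ℕ) (C : Finset (List V)) : Prop :=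
  (∀ l ∈ C, l.length = k ∧ l.Nodup ∧ l.Chain' G.Adj) ∧
  ∀ x : V, ∃! l : List V, l ∈ C ∧ x ∈ l

/-- All edges used by a class of paths. -/
def classEdges {V : Type*} [DecidableEq V] (C : Finset (List V)) : Finset (Sym2 V) :=
  C.biUnion pathEdges

/-- A uniformly resolvable `(P₂,P₃,P₄)`-decomposition of `G` into `r` perfect matchings
(parallel classes of `P₂`), `s` parallel classes of `P₃` and `t` parallel classes of `P₄`:
pairwise edge-disjoint classes whose edges together are exactly the edges of `G`. -/
def IsURD {V : Type*} [DecidableEq V] (G : SimpleGraph V) (r s t : ℕ) : Prop :=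
  ∃ F : Fin r ⊕ Fin s ⊕ Fin t → Finset (List V),
    (∀ i, IsPathClass G (Sum.elim (fun _ => 2) (Sum.elim (fun _ => 3) (fun _ => 4)) i) (F i)) ∧
    (∀ i j, i ≠ j → Disjoint (classEdges (F i)) (classEdges (F j))) ∧
    (∀ e, e ∈ G.edgeSet ↔ ∃ i, e ∈ classEdges (F i))

/-- The graph `C_{5(6)}`: the lexicographic blow-up of a 5-cycle by 6 independent
vertices.  Vertices are `Z₆ × Z₅`, and `(i, a)` is adjacent to `(j, b)` iff `a` and `b`
are consecutive modulo 5. -/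
def C56 : SimpleGraph (ZMod 6 × ZMod 5) where
  Adj u v := u.2 = v.2 + 1 ∨ v.2 = u.2 + 1
  symm := ⟨fun u v h => h.symm⟩
  loopless := ⟨by intro u h; rcases h with h | h <;> simp at h <;> exact absurd h (by decide)⟩

def chainDec {α : Type*} (R : α → α → Prop) [DecidableRel R] :
    ∀ (a : α) (l : List α), Decidable (List.Chain R a l)
  | _, [] => isTrue List.Chain.nil
  | a, b :: l =>
    @decidable_of_iff _ _ List.chain_cons.symm
      (@instDecidableAnd _ _ _ (chainDec R b l))

instance (priority := 2000) chain'Dec {α : Type*} (R : α → α → Prop) [DecidableRel R] :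
    ∀ l : List α, Decidable (l.Chain' R)
  | [] => isTrue List.IsChain.nil
  | a :: l => chainDec R a l

instance : DecidableRel C56.Adj := fun u v =>
  decidable_of_iff (u.2 = v.2 + 1 ∨ v.2 = u.2 + 1) Iff.rfl

def cls0 : Finset (List (ZMod 6 × ZMod 5)) :=
  [[(0,1),(0,0),(1,1)],
   [(2,2),(2,1),(3,2)],
   [(1,3),(1,2),(2,3)],
   [(2,4),(0,3),(3,4)],
   [(1,0),(1,4),(2,0)],
   [(3,1),(3,0),(4,1)],
   [(5,2),(5,1),(0,2)],
   [(4,3),(4,2),(5,3)],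
   [(5,4),(3,3),(0,4)],
   [(4,0),(4,4),(5,0)]].toFinset

def cls1 : Finset (List (ZMod 6 × ZMod 5)) :=
  [[(1,1),(1,0),(2,1)],
   [(3,2),(3,1),(4,2)],
   [(2,3),(2,2),(3,3)],
   [(3,4),(1,3),(4,4)],
   [(2,0),(2,4),(3,0)],
   [(4,1),(4,0),(5,1)],
   [(0,2),(0,1),(1,2)],
   [(5,3),(5,2),(0,3)],
   [(0,4),(4,3),(1,4)],
   [(5,0),(5,4),(0,0)]].toFinset

def cls2 : Finset (List (ZMod 6 × ZMod 5)) :=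
  [[(2,1),(2,0),(3,1)],
   [(4,2),(4,1),(5,2)],
   [(3,3),(3,2),(4,3)],
   [(4,4),(2,3),(5,4)],
   [(3,0),(3,4),(4,0)],
   [(5,1),(5,0),(0,1)],
   [(1,2),(1,1),(2,2)],
   [(0,3),(0,2),(1,3)],
   [(1,4),(5,3),(2,4)],
   [(0,0),(0,4),(1,0)]].toFinset

def cls3 : Finset (List (ZMod 6 × ZMod 5)) :=
  [[(2,1),(0,0),(3,1)],
   [(3,2),(1,1),(4,2)],
   [(4,3),(2,2),(5,3)],
   [(4,4),(0,3),(5,4)],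
   [(4,0),(0,4),(5,0)],
   [(5,1),(3,0),(0,1)],
   [(0,2),(4,1),(1,2)],
   [(1,3),(5,2),(2,3)],
   [(1,4),(3,3),(2,4)],
   [(1,0),(3,4),(2,0)]].toFinset

def cls4 : Finset (List (ZMod 6 × ZMod 5)) :=
  [[(3,1),(1,0),(4,1)],
   [(4,2),(2,1),(5,2)],
   [(5,3),(3,2),(0,3)],
   [(5,4),(1,3),(0,4)],
   [(5,0),(1,4),(0,0)],
   [(0,1),(4,0),(1,1)],
   [(1,2),(5,1),(2,2)],
   [(2,3),(0,2),(3,3)],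
   [(2,4),(4,3),(3,4)],
   [(2,0),(4,4),(3,0)]].toFinset

def cls5 : Finset (List (ZMod 6 × ZMod 5)) :=
  [[(4,1),(2,0),(5,1)],
   [(5,2),(3,1),(0,2)],
   [(0,3),(4,2),(1,3)],
   [(0,4),(2,3),(1,4)],
   [(0,0),(2,4),(1,0)],
   [(1,1),(5,0),(2,1)],
   [(2,2),(0,1),(3,2)],
   [(3,3),(1,2),(4,3)],
   [(3,4),(5,3),(4,4)],
   [(3,0),(5,4),(4,0)]].toFinset

def cls6 : Finset (List (ZMod 6 × ZMod 5)) :=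
  [[(4,1),(0,0),(5,1)],
   [(4,2),(0,1),(5,2)],
   [(4,3),(0,2),(5,3)],
   [(0,4),(0,3),(1,4)],
   [(4,0),(2,4),(5,0)],
   [(1,1),(3,0),(2,1)],
   [(1,2),(3,1),(2,2)],
   [(1,3),(3,2),(2,3)],
   [(3,4),(3,3),(4,4)],
   [(1,0),(5,4),(2,0)]].toFinset

def cls7 : Finset (List (ZMod 6 × ZMod 5)) :=
  [[(5,1),(1,0),(0,1)],
   [(5,2),(1,1),(0,2)],
   [(5,3),(1,2),(0,3)],
   [(1,4),(1,3),(2,4)],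
   [(5,0),(3,4),(0,0)],
   [(2,1),(4,0),(3,1)],
   [(2,2),(4,1),(3,2)],
   [(2,3),(4,2),(3,3)],
   [(4,4),(4,3),(5,4)],
   [(2,0),(0,4),(3,0)]].toFinset

def cls8 : Finset (List (ZMod 6 × ZMod 5)) :=
  [[(0,1),(2,0),(1,1)],
   [(0,2),(2,1),(1,2)],
   [(0,3),(2,2),(1,3)],
   [(2,4),(2,3),(3,4)],
   [(0,0),(4,4),(1,0)],
   [(3,1),(5,0),(4,1)],
   [(3,2),(5,1),(4,2)],
   [(3,3),(5,2),(4,3)],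
   [(5,4),(5,3),(0,4)],
   [(3,0),(1,4),(4,0)]].toFinset

def Fcls : Fin 0 ⊕ Fin 9 ⊕ Fin 0 → Finset (List (ZMod 6 × ZMod 5)) :=
  Sum.elim (fun i => i.elim0) (Sum.elim
    (![cls0, cls1, cls2, cls3, cls4, cls5, cls6, cls7, cls8])
    (fun i => i.elim0))

lemma euIff {V : Type*} (C : Finset (List V)) (x : V) :
    (∃ l ∈ C, x ∈ l ∧ ∀ l' ∈ C, x ∈ l' → l' = l) → (∃! l : List V, l ∈ C ∧ x ∈ l) := by
  rintro ⟨l, hl, hx, hu⟩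
  exact ⟨l, ⟨hl, hx⟩, fun l' ⟨h1, h2⟩ => hu l' h1 h2⟩

def cl : Fin 9 → Finset (List (ZMod 6 × ZMod 5)) :=
  ![cls0, cls1, cls2, cls3, cls4, cls5, cls6, cls7, cls8]

lemma Fcls_eq : Fcls = Sum.elim (fun i => i.elim0) (Sum.elim cl (fun i => i.elim0)) := rfl

lemma chain'_zip {α : Type*} {R : α → α → Prop} :
    ∀ {l : List α}, l.Chain' R → ∀ p ∈ l.zip l.tail, R p.1 p.2
  | [], _, p, hp => by simp at hp
  | [a], _, p, hp => by simp at hp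
  | a :: b :: l, h, p, hp => by
    rw [List.Chain', List.isChain_cons_cons] at h
    simp only [List.tail_cons, List.zip_cons_cons, List.mem_cons] at hp
    rcases hp with rfl | hp
    · exact h.1
    · exact chain'_zip h.2 p (by simpa using hp)

lemma pathEdges_subset {V : Type*} [DecidableEq V] {G : SimpleGraph V} {l : List V}
    (h : l.Chain' G.Adj) : ∀ e ∈ pathEdges l, e ∈ G.edgeSet := by
  intro e he
  simp only [pathEdges, List.mem_toFinset, List.mem_map] at he
  obtain ⟨⟨u, v⟩, hp, rfl⟩ := he
  exact chain'_zip h _ hp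

set_option maxRecDepth 40000 in
lemma hcls : ∀ k : Fin 9, ∀ l ∈ cl k, l.length = 3 ∧ l.Nodup ∧ l.Chain' C56.Adj := by decide

set_option maxRecDepth 40000 in
lemma hcov : ∀ (k : Fin 9) (x : ZMod 6 × ZMod 5),
    ∃ l ∈ cl k, x ∈ l ∧ ∀ l' ∈ cl k, x ∈ l' → l' = l := by decide

set_option maxRecDepth 100000 in
set_option maxHeartbeats 2000000 in
lemma hdisj : ∀ a b : Fin 9, a ≠ b → Disjoint (classEdges (cl a)) (classEdges (cl b)) := by
  decide

set_option maxRecDepth 40000 in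
lemma hcard : ∀ k : Fin 9, (classEdges (cl k)).card = 20 := by decide

set_option maxRecDepth 40000 in
lemma hdeg : ∀ v : ZMod 6 × ZMod 5, C56.degree v = 12 := by decide

lemma hE : C56.edgeFinset.card = 180 := by
  have h := SimpleGraph.sum_degrees_eq_twice_card_edges C56
  simp only [hdeg, Finset.sum_const, smul_eq_mul] at h
  have hc : (Finset.univ : Finset (ZMod 6 × ZMod 5)).card = 30 := by decide
  omega

lemma hU : (Finset.univ : Finset (Fin 9)).biUnion (fun k => classEdges (cl k))
    = C56.edgeFinset := by
  apply Finset.eq_of_subset_of_card_le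
  · intro e he
    rw [Finset.mem_biUnion] at he
    obtain ⟨k, -, he⟩ := he
    rw [classEdges, Finset.mem_biUnion] at he
    obtain ⟨l, hl, he⟩ := he
    rw [SimpleGraph.mem_edgeFinset]
    exact pathEdges_subset (hcls k l hl).2.2 e he
  · rw [hE, Finset.card_biUnion (fun a _ b _ hab => hdisj a b hab)]
    simp [hcard]

/-- There is a resolvable decomposition of `C_{5(6)}` into 9 parallel classes, each
consisting of 10 vertex-disjoint paths `P₃` covering all 30 vertices. -/
theorem stmt13 : IsURD C56 0 9 0 := by
  refine ⟨Fcls, ?_, ?_, ?_⟩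
  · intro i
    match i with
    | Sum.inl i => exact i.elim0
    | Sum.inr (Sum.inr i) => exact i.elim0
    | Sum.inr (Sum.inl k) =>
      exact ⟨hcls k, fun x => euIff _ x (hcov k x)⟩
  · intro i j hij
    match i, j with
    | Sum.inl i, _ => exact i.elim0
    | _, Sum.inl j => exact j.elim0
    | Sum.inr (Sum.inr i), _ => exact i.elim0
    | _, Sum.inr (Sum.inr j) => exact j.elim0
    | Sum.inr (Sum.inl a), Sum.inr (Sum.inl b) =>
      exact hdisj a b (by rintro rfl; exact hij rfl)
  · intro e
    rw [← SimpleGraph.mem_edgeFinset, ← hU, Finset.mem_biUnion]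
    constructor
    · rintro ⟨k, -, hk⟩
      exact ⟨Sum.inr (Sum.inl k), hk⟩
    · rintro ⟨i, hi⟩
      match i with
      | Sum.inl i => exact i.elim0
      | Sum.inr (Sum.inr i) => exact i.elim0
      | Sum.inr (Sum.inl k) => exact ⟨k, Finset.mem_univ k, hi⟩
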